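/- arXiv:2605.22223 — 3 statements merged into one kernel-verified Lean document; each statement's English description precedes it below -/
import Mathlib

section
/- The volume of the generalized unit ball B^d_{p_1···p_d} = {x ∈ R^d : |x_1|^{p_1} + ··· + |x_d|^{p_d} ≤ 1}, with p_1,…,p_d > 0, equals 2^d · Γ(1+1/p_1)···Γ(1+1/p_d) / Γ(1 + 1/p_1 + ··· + 1/p_d). -/
open MeasureTheory Real Set
open scoped ENNReal

lemma aux_integrableOn_exp_neg_rpow {p : ℝ} (hp : 0 < p) :
    IntegrableOn (fun x : ℝ => Real.exp (-x ^ p)) (Ioi 0) := by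
  rw [← integrableOn_Ioi_comp_rpow_iff (fun x : ℝ => Real.exp (-x ^ p))
    (one_div_ne_zero hp.ne')]
  have h := Real.GammaIntegral_convergent (s := 1 / p) (one_div_pos.mpr hp)
  refine IntegrableOn.congr_fun (h.const_mul |1 / p|) (fun x hx => ?_) measurableSet_Ioi
  rw [smul_eq_mul, ← Real.rpow_mul (le_of_lt hx), one_div_mul_cancel hp.ne', Real.rpow_one]
  ring

lemma aux_integrable_exp_neg_abs_rpow {p : ℝ} (hp : 0 < p) :
    Integrable (fun x : ℝ => Real.exp (-|x| ^ p)) := by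
  have h0 : IntegrableOn (fun x : ℝ => Real.exp (-|x| ^ p)) (Ioi 0) := by
    refine (aux_integrableOn_exp_neg_rpow hp).congr_fun (fun x hx => ?_) measurableSet_Ioi
    rw [abs_of_pos hx]
  have h1 : IntegrableOn (fun x : ℝ => Real.exp (-|x| ^ p)) (Iic 0) := by
    rw [← Measure.map_neg_eq_self (volume : Measure ℝ)]
    have m : MeasurableEmbedding fun x : ℝ => -x := (Homeomorph.neg ℝ).measurableEmbedding
    rw [m.integrableOn_map_iff]
    simp_rw [Function.comp_def, abs_neg, neg_preimage, neg_Iic, neg_zero]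
    exact Iff.mpr integrableOn_Ici_iff_integrableOn_Ioi h0
  have := h1.union h0
  rwa [Iic_union_Ioi, integrableOn_univ] at this

lemma aux_scaling (d : ℕ) (p : Fin d → ℝ) (hp : ∀ i, 0 < p i) {u : ℝ} (hu : 0 < u) :
    volume {x : Fin d → ℝ | ∑ i, |x i| ^ p i ≤ u} =
      ENNReal.ofReal (u ^ (∑ i, 1 / p i)) *
        volume {x : Fin d → ℝ | ∑ i, |x i| ^ p i ≤ 1} := by
  set T : (Fin d → ℝ) →ₗ[ℝ] (Fin d → ℝ) :=
    Matrix.toLin' (Matrix.diagonal fun i => u ^ (-(1 / p i))) with hT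
  have hdet : LinearMap.det T = u ^ (-∑ i, 1 / p i) := by
    rw [hT, LinearMap.det_toLin', Matrix.det_diagonal, ← Finset.sum_neg_distrib,
      Real.rpow_sum_of_pos hu]
  have hseteq : {x : Fin d → ℝ | ∑ i, |x i| ^ p i ≤ u} =
      T ⁻¹' {x : Fin d → ℝ | ∑ i, |x i| ^ p i ≤ 1} := by
    ext x
    have hTx : ∀ i, T x i = u ^ (-(1 / p i)) * x i := by
      intro i
      rw [hT, Matrix.toLin'_apply, Matrix.mulVec_diagonal]
    simp only [Set.mem_preimage, Set.mem_setOf_eq]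
    have : ∀ i, |T x i| ^ p i = u⁻¹ ^ (1 / p i * p i) * |x i| ^ p i := by
      intro i
      rw [hTx i, abs_mul, Real.mul_rpow (abs_nonneg _) (abs_nonneg _),
        abs_of_pos (Real.rpow_pos_of_pos hu _)]
      rw [← Real.rpow_neg_one u, ← Real.rpow_mul hu.le, ← Real.rpow_mul hu.le]
      ring_nf
    rw [Finset.sum_congr rfl (fun i _ => this i)]
    have hup : ∀ i : Fin d, u⁻¹ ^ (1 / p i * p i) = u⁻¹ := by
      intro i
      rw [one_div_mul_cancel (hp i).ne', Real.rpow_one]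
    simp_rw [hup]
    rw [← Finset.mul_sum, inv_mul_le_iff₀ hu, mul_one]
  rw [hseteq, MeasureTheory.Measure.addHaar_preimage_linearMap volume
    (by rw [hdet]; exact (Real.rpow_pos_of_pos hu _).ne'), hdet]
  congr 1
  rw [← Real.rpow_neg hu.le, neg_neg, abs_of_pos (Real.rpow_pos_of_pos hu _)]

lemma aux_layercake (d : ℕ) (p : Fin d → ℝ) (hp : ∀ i, 0 < p i) :
    ∫⁻ u in Ioi (0 : ℝ),
        ENNReal.ofReal (Real.exp (-u)) * volume {x : Fin d → ℝ | ∑ i, |x i| ^ p i ≤ u} =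
      ∫⁻ x : Fin d → ℝ, ENNReal.ofReal (Real.exp (-(∑ i, |x i| ^ p i))) := by
  set g : (Fin d → ℝ) → ℝ := fun x => ∑ i, |x i| ^ p i with hg_def
  have hg : Continuous g :=
    continuous_finset_sum _ fun i _ =>
      ((continuous_abs.comp (continuous_apply i)).rpow_const fun x => Or.inr (hp i).le)
  have hg0 : ∀ x, 0 ≤ g x := fun x =>
    Finset.sum_nonneg fun i _ => Real.rpow_nonneg (abs_nonneg _) _
  set S : Set (ℝ × (Fin d → ℝ)) := {q | g q.2 ≤ q.1} with hS_def
  have hS : MeasurableSet S :=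
    (isClosed_le (hg.comp continuous_snd) continuous_fst).measurableSet
  have hmeas : ∀ u : ℝ, MeasurableSet {x : Fin d → ℝ | g x ≤ u} := fun u =>
    (isClosed_le hg continuous_const).measurableSet
  calc
    ∫⁻ u in Ioi (0 : ℝ), ENNReal.ofReal (Real.exp (-u)) * volume {x : Fin d → ℝ | g x ≤ u}
        = ∫⁻ u in Ioi (0 : ℝ), ∫⁻ x : Fin d → ℝ,
            ENNReal.ofReal (Real.exp (-u)) * S.indicator 1 (u, x) := by
        refine setLIntegral_congr_fun measurableSet_Ioi (fun u _ => ?_)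
        have hfun : ∀ x : Fin d → ℝ, S.indicator 1 (u, x) =
            ({x : Fin d → ℝ | g x ≤ u}).indicator (1 : (Fin d → ℝ) → ℝ≥0∞) x := by
          intro x
          simp only [Set.indicator_apply, hS_def, Set.mem_setOf_eq, Pi.one_apply]
        simp_rw [hfun]
        rw [lintegral_const_mul _ (measurable_one.indicator (hmeas u)),
          lintegral_indicator_one (hmeas u)]
    _ = ∫⁻ x : Fin d → ℝ, ∫⁻ u in Ioi (0 : ℝ),
            ENNReal.ofReal (Real.exp (-u)) * S.indicator 1 (u, x) := by
        refine lintegral_lintegral_swap ?_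
        refine (Measurable.aemeasurable ?_)
        exact ((ENNReal.measurable_ofReal.comp
          ((Real.continuous_exp.comp continuous_neg).measurable.comp measurable_fst)).mul
          (measurable_const.indicator hS))
    _ = ∫⁻ x : Fin d → ℝ, ENNReal.ofReal (Real.exp (-g x)) := by
        refine lintegral_congr fun x => ?_
        have h1 : ∀ u : ℝ, ENNReal.ofReal (Real.exp (-u)) * S.indicator 1 (u, x) =
            (Ici (g x)).indicator (fun u => ENNReal.ofReal (Real.exp (-u))) u := by
          intro u
          simp only [Set.indicator_apply, hS_def, Set.mem_setOf_eq, Set.mem_Ici, Pi.one_apply,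
            mul_ite, mul_one, mul_zero]
        simp_rw [h1]
        rw [lintegral_indicator measurableSet_Ici, Measure.restrict_restrict measurableSet_Ici]
        have hae : (Ici (g x) ∩ Ioi 0 : Set ℝ) =ᵐ[volume] Ioi (g x) := by
          rw [Filter.eventuallyEq_set]
          have : ∀ u : ℝ, u ≠ g x → (u ∈ Ici (g x) ∩ Ioi 0 ↔ u ∈ Ioi (g x)) := by
            intro u hu
            simp only [Set.mem_inter_iff, Set.mem_Ici, Set.mem_Ioi]
            constructor
            · rintro ⟨h1', _⟩; exact lt_of_le_of_ne h1' (Ne.symm hu)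
            · intro h'; exact ⟨h'.le, lt_of_le_of_lt (hg0 x) h'⟩
          filter_upwards [compl_mem_ae_iff.mpr (volume_singleton (a := g x))] with u hu
          exact this u hu
        rw [setLIntegral_congr hae]
        rw [← ofReal_integral_eq_lintegral_ofReal
          (((exp_neg_integrableOn_Ioi (g x) one_pos)).congr_fun
            (fun y _ => by dsimp only; rw [neg_one_mul]) measurableSet_Ioi)
          ((ae_restrict_iff' measurableSet_Ioi).mpr (ae_of_all _ fun y _ => (Real.exp_pos _).le)),
          integral_exp_neg_Ioi]

/-- Volume of the generalized unit ball `{x : |x_1|^{p_1} + ⋯ + |x_d|^{p_d} ≤ 1}`. -/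
theorem volume_generalized_unit_ball (d : ℕ) (p : Fin d → ℝ) (hp : ∀ i, 0 < p i) :
    volume {x : Fin d → ℝ | ∑ i, |x i| ^ (p i) ≤ 1} =
      ENNReal.ofReal (2 ^ d * (∏ i, Real.Gamma (1 + 1 / p i)) /
        Real.Gamma (1 + ∑ i, 1 / p i)) := by
  set s : ℝ := ∑ i, 1 / p i with hs_def
  have hs0 : (0 : ℝ) ≤ s := Finset.sum_nonneg fun i _ => one_div_nonneg.mpr (hp i).le
  set V := volume {x : Fin d → ℝ | ∑ i, |x i| ^ p i ≤ 1} with hV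
  have key : ENNReal.ofReal (Real.Gamma (s + 1)) * V =
      ENNReal.ofReal (∏ i, (2 * Real.Gamma (1 / p i + 1))) := by
    have h1 := aux_layercake d p hp
    have hL : (∫⁻ u in Ioi (0 : ℝ), ENNReal.ofReal (Real.exp (-u)) *
          volume {x : Fin d → ℝ | ∑ i, |x i| ^ p i ≤ u}) =
        ENNReal.ofReal (Real.Gamma (s + 1)) * V := by
      have step1 : ∀ u ∈ Ioi (0 : ℝ), ENNReal.ofReal (Real.exp (-u)) *
          volume {x : Fin d → ℝ | ∑ i, |x i| ^ p i ≤ u} =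
          ENNReal.ofReal (Real.exp (-u) * u ^ s) * V := by
        intro u hu
        rw [aux_scaling d p hp hu, ← mul_assoc,
          ← ENNReal.ofReal_mul (Real.exp_pos _).le]
      rw [setLIntegral_congr_fun measurableSet_Ioi step1,
        lintegral_mul_const _ (by fun_prop :
          Measurable fun u : ℝ => ENNReal.ofReal (Real.exp (-u) * u ^ s))]
      congr 1
      rw [← ofReal_integral_eq_lintegral_ofReal
        (by simpa [IntegrableOn] using Real.GammaIntegral_convergent (show (0:ℝ) < s + 1 by linarith))
        ((ae_restrict_iff' measurableSet_Ioi).mpr (ae_of_all _ fun u hu => mul_nonneg (Real.exp_pos _).le (Real.rpow_nonneg (le_of_lt hu) _)))]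
      congr 1
      rw [Real.Gamma_eq_integral (show (0:ℝ) < s + 1 by linarith)]
      exact (setIntegral_congr_fun measurableSet_Ioi fun u hu => by
        rw [add_sub_cancel_right]).symm
    have hR : (∫⁻ x : Fin d → ℝ, ENNReal.ofReal (Real.exp (-(∑ i, |x i| ^ p i)))) =
        ENNReal.ofReal (∏ i, (2 * Real.Gamma (1 / p i + 1))) := by
      have hprod : ∀ x : Fin d → ℝ,
          Real.exp (-(∑ i, |x i| ^ p i)) = ∏ i, Real.exp (-(|x i| ^ p i)) := by
        intro x
        rw [← Real.exp_sum, ← Finset.sum_neg_distrib]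
      simp_rw [hprod]
      rw [volume_pi]
      rw [← ofReal_integral_eq_lintegral_ofReal
        (Integrable.fintype_prod (f := fun i (t : ℝ) => Real.exp (-(|t| ^ p i)))
          fun i => aux_integrable_exp_neg_abs_rpow (hp i))
        (ae_of_all _ fun x => Finset.prod_nonneg fun i _ => (Real.exp_pos _).le)]
      rw [integral_fintype_prod_eq_prod (fun i (t : ℝ) => Real.exp (-(|t| ^ p i)))]
      congr 1
      refine Finset.prod_congr rfl fun i _ => ?_
      rw [integral_comp_abs (f := fun t => Real.exp (-t ^ p i)),
        integral_exp_neg_rpow (hp i)]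
    rw [← hL, h1, hR]
  have hΓpos : 0 < Real.Gamma (s + 1) := Real.Gamma_pos_of_pos (by linarith)
  have h2 : V = ENNReal.ofReal (∏ i, (2 * Real.Gamma (1 / p i + 1))) /
      ENNReal.ofReal (Real.Gamma (s + 1)) :=
    (ENNReal.eq_div_iff (ne_of_gt (ENNReal.ofReal_pos.mpr hΓpos)) ENNReal.ofReal_ne_top).mpr key
  have e1 : ∏ i, (2 * Real.Gamma (1 / p i + 1)) =
      2 ^ d * ∏ i, Real.Gamma (1 + 1 / p i) := by
    rw [Finset.prod_mul_distrib, Finset.prod_const, Finset.card_univ, Fintype.card_fin]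
    congr 1
    exact Finset.prod_congr rfl fun i _ => by rw [add_comm]
  have e2 : (1 : ℝ) + s = s + 1 := add_comm _ _
  rw [e2, ENNReal.ofReal_div_of_pos hΓpos, h2, e1]
end

section
/- Let d ≥ 2, r > 0, δ ∈ (0, π), and let C_{δ,r} be the intersection of the cone {x ∈ R^d : x_1 tan(δ/2) > sqrt(x_2² + ··· + x_d²)} with the Euclidean ball of radius r. Then the Lebesgue volume of C_{δ,r} equals ω_{d−1} r^d [ (1/d) sin^{d−1}(δ/2) cos(δ/2) + (1/2)( B(1/2, (d+1)/2) − B(cos²(δ/2); 1/2, (d+1)/2) ) ], where ω_{d−1} is the volume of the unit ball in R^{d−1}. -/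
open MeasureTheory Metric

/-- The Beta function `B(a,b) = ∫₀¹ t^{a-1}(1-t)^{b-1} dt`. -/
noncomputable def betaFn (a b : ℝ) : ℝ := ∫ t in (0:ℝ)..1, t ^ (a - 1) * (1 - t) ^ (b - 1)

/-- The incomplete Beta function `B(x;a,b) = ∫₀^x t^{a-1}(1-t)^{b-1} dt`. -/
noncomputable def incBetaFn (x a b : ℝ) : ℝ := ∫ t in (0:ℝ)..x, t ^ (a - 1) * (1 - t) ^ (b - 1)

namespace TruncConeAux

open intervalIntegral

lemma sum_filter_ne_zero (n : ℕ) (x : Fin (n+1) → ℝ) :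
    ∑ i ∈ Finset.univ.filter (fun i : Fin (n+1) => i.val ≠ 0), x i = ∑ j : Fin n, x j.succ := by
  rw [Finset.sum_filter, Fin.sum_univ_succ]
  simp

lemma section_vol (n : ℕ) (hn : 1 ≤ n) (a c : ℝ) (ha : 0 < a) (hc : 0 ≤ c) :
    volume {y : Fin n → ℝ | Real.sqrt (∑ j, y j ^ 2) < a ∧ ∑ j, y j ^ 2 ≤ c} =
      ENNReal.ofReal (min a (Real.sqrt c) ^ n) *
        volume (closedBall (0 : EuclideanSpace ℝ (Fin n)) 1) := by
  haveI : Nontrivial (EuclideanSpace ℝ (Fin n)) := by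
    have : 0 < Module.finrank ℝ (EuclideanSpace ℝ (Fin n)) := by
      rw [finrank_euclideanSpace_fin]; omega
    exact Module.nontrivial_of_finrank_pos this
  have key : {y : Fin n → ℝ | Real.sqrt (∑ j, y j ^ 2) < a ∧ ∑ j, y j ^ 2 ≤ c} =
      (MeasurableEquiv.toLp 2 (Fin n → ℝ)).symm.symm ⁻¹'
        (ball (0 : EuclideanSpace ℝ (Fin n)) a ∩ closedBall 0 (Real.sqrt c)) := by
    ext y
    have hnorm : ‖(MeasurableEquiv.toLp 2 (Fin n → ℝ)).symm.symm y‖ = Real.sqrt (∑ j, y j ^ 2) := by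
      rw [EuclideanSpace.norm_eq]
      congr 1
      apply Finset.sum_congr rfl
      intro j _
      rw [Real.norm_eq_abs, sq_abs]; rfl
    simp only [Set.mem_setOf_eq, Set.mem_preimage, Set.mem_inter_iff, mem_ball_zero_iff,
      mem_closedBall_zero_iff, hnorm]
    constructor
    · rintro ⟨h1, h2⟩
      exact ⟨h1, Real.sqrt_le_sqrt h2⟩
    · rintro ⟨h1, h2⟩
      refine ⟨h1, ?_⟩
      rwa [Real.sqrt_le_sqrt_iff (by positivity)] at h2
  rw [key, ((EuclideanSpace.volume_preserving_symm_measurableEquiv_toLp (Fin n)).symm).measure_preimage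
    ((measurableSet_ball.inter measurableSet_closedBall).nullMeasurableSet)]
  rcases le_or_gt a (Real.sqrt c) with h | h
  · rw [Set.inter_eq_self_of_subset_left
      (ball_subset_closedBall.trans (closedBall_subset_closedBall h)), min_eq_left h,
      Measure.addHaar_ball _ _ ha.le, finrank_euclideanSpace_fin,
      Measure.addHaar_closedBall_eq_addHaar_ball]
  · rw [Set.inter_eq_self_of_subset_right (closedBall_subset_ball h), min_eq_right h.le,
      Measure.addHaar_closedBall _ _ (Real.sqrt_nonneg c), finrank_euclideanSpace_fin,
      Measure.addHaar_closedBall_eq_addHaar_ball]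

lemma subst_sqrt (n : ℕ) (c : ℝ) (hc0 : 0 < c) (hc1 : c ≤ 1) :
    ∫ u in c..1, Real.sqrt (1 - u ^ 2) ^ n =
      (1/2) * ∫ t in (c^2)..1, t ^ (-(1:ℝ)/2) * (1 - t) ^ ((n:ℝ)/2) := by
  have hc2 : (0:ℝ) < c^2 := by positivity
  have hsq : Real.sqrt (c^2) = c := Real.sqrt_sq hc0.le
  have key : ∫ t in (c^2)..1, (1/(2 * Real.sqrt t)) •
      ((fun u => Real.sqrt (1 - u ^ 2) ^ n) ∘ Real.sqrt) t = ∫ u in Real.sqrt (c^2)..Real.sqrt 1,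
        Real.sqrt (1 - u ^ 2) ^ n := by
    apply integral_comp_smul_deriv
    · intro x hx
      rw [Set.uIcc_of_le (by nlinarith)] at hx
      exact Real.hasDerivAt_sqrt (by nlinarith [hx.1])
    · apply ContinuousOn.div continuousOn_const
      · exact (continuous_const.mul Real.continuous_sqrt).continuousOn
      · intro x hx
        rw [Set.uIcc_of_le (by nlinarith)] at hx
        have : 0 < Real.sqrt x := Real.sqrt_pos.2 (lt_of_lt_of_le hc2 hx.1)
        positivity
    · exact (Real.continuous_sqrt.comp (by continuity)).pow n
  rw [hsq, Real.sqrt_one] at key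
  rw [← key, ← intervalIntegral.integral_const_mul]
  apply integral_congr
  intro t ht
  rw [Set.uIcc_of_le (by nlinarith)] at ht
  have ht0 : 0 < t := lt_of_lt_of_le hc2 ht.1
  have h1t : (0:ℝ) ≤ 1 - t := by linarith [ht.2]
  have e0 : Real.sqrt t ^ 2 = t := Real.sq_sqrt ht0.le
  have e1 : Real.sqrt (1-t) ^ n = (1-t) ^ ((n:ℝ)/2) := by
    rw [Real.sqrt_eq_rpow, ← Real.rpow_natCast ((1-t) ^ ((1:ℝ)/2)) n, ← Real.rpow_mul h1t]
    congr 1; ring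
  have e2 : 1/(2*Real.sqrt t) = (1/2) * t ^ (-(1:ℝ)/2) := by
    rw [Real.sqrt_eq_rpow, show (-(1:ℝ)/2) = -(1/2) by norm_num, Real.rpow_neg ht0.le]
    ring
  simp only [smul_eq_mul, Function.comp_apply, e0, e1, e2]
  ring

lemma beta_split (n : ℕ) (hn : 1 ≤ n) (c : ℝ) (hc0 : 0 < c) (hc1 : c < 1) :
    betaFn (1/2) (((n:ℝ)+2)/2) - incBetaFn c (1/2) (((n:ℝ)+2)/2)
      = ∫ t in c..1, t ^ (-(1:ℝ)/2) * (1 - t) ^ ((n:ℝ)/2) := by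
  have hexp : ((1:ℝ)/2 - 1) = -(1:ℝ)/2 := by norm_num
  have hexp2 : (((n:ℝ)+2)/2 - 1) = (n:ℝ)/2 := by ring
  have hpos : (0:ℝ) < (n:ℝ)/2 := by
    have : (1:ℝ) ≤ (n:ℝ) := by exact_mod_cast hn
    linarith
  have hcont : Continuous fun t : ℝ => (1 - t) ^ ((n:ℝ)/2) :=
    (continuous_iff_continuousAt.2 fun y =>
      Real.continuousAt_rpow_const y _ (Or.inr hpos.le)).comp (continuous_const.sub continuous_id)
  have hint : ∀ a b : ℝ, IntervalIntegrable (fun t : ℝ => t ^ (-(1:ℝ)/2) * (1-t) ^ ((n:ℝ)/2))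
      volume a b := fun a b =>
    (intervalIntegrable_rpow' (by norm_num)).mul_continuousOn hcont.continuousOn
  have hadd := integral_add_adjacent_intervals (a := (0:ℝ)) (b := c) (c := 1)
    (f := fun t : ℝ => t ^ (-(1:ℝ)/2) * (1-t) ^ ((n:ℝ)/2)) (hint 0 c) (hint c 1)
  rw [betaFn, incBetaFn]
  simp only [hexp, hexp2]
  linarith [hadd]

end TruncConeAux

open TruncConeAux in
set_option maxHeartbeats 1000000 in
/-- Volume of the truncated cone `C_{δ,r}` of opening angle `δ` and radius `r` in `ℝ^d`. -/
theorem volume_truncated_cone (d : ℕ) (hd : 2 ≤ d) (r δ : ℝ) (hr : 0 < r)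
    (hδ : δ ∈ Set.Ioo 0 Real.pi) :
    volume ({x : EuclideanSpace ℝ (Fin d) |
        Real.sqrt (∑ i ∈ Finset.univ.filter (fun i : Fin d => i.val ≠ 0), x i ^ 2) <
          x ⟨0, by omega⟩ * Real.tan (δ / 2)} ∩ closedBall 0 r) =
      volume (closedBall (0 : EuclideanSpace ℝ (Fin (d - 1))) 1) *
        ENNReal.ofReal (r ^ d *
          ((1 / (d : ℝ)) * Real.sin (δ / 2) ^ (d - 1) * Real.cos (δ / 2) +
            (1 / 2) * (betaFn (1 / 2) (((d : ℝ) + 1) / 2) -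
              incBetaFn (Real.cos (δ / 2) ^ 2) (1 / 2) (((d : ℝ) + 1) / 2)))) := by
  obtain ⟨n, rfl⟩ : ∃ n, d = n + 1 := ⟨d - 1, by omega⟩
  have hn : 1 ≤ n := by omega
  set θ := δ / 2 with hθdef
  have hθ0 : 0 < θ := by simp only [hθdef]; linarith [hδ.1]
  have hθπ : θ < Real.pi / 2 := by simp only [hθdef]; linarith [hδ.2]
  have hcos : 0 < Real.cos θ := Real.cos_pos_of_mem_Ioo ⟨by linarith, hθπ⟩
  have hsin : 0 < Real.sin θ := Real.sin_pos_of_pos_of_lt_pi hθ0 (by linarith [Real.pi_pos])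
  have htan : 0 < Real.tan θ := Real.tan_pos_of_pos_of_lt_pi_div_two hθ0 hθπ
  have hpyth : Real.sin θ ^ 2 + Real.cos θ ^ 2 = 1 := Real.sin_sq_add_cos_sq θ
  have hcos1 : Real.cos θ < 1 := by nlinarith
  have htc : Real.tan θ * Real.cos θ = Real.sin θ := Real.tan_mul_cos hcos.ne'
  set ω := volume (closedBall (0 : EuclideanSpace ℝ (Fin n)) 1) with hωdef
  -- the set in product form
  set B : Set (ℝ × (Fin n → ℝ)) := {p | Real.sqrt (∑ j, p.2 j ^ 2) < p.1 * Real.tan θ ∧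
      p.1 ^ 2 + ∑ j, p.2 j ^ 2 ≤ r ^ 2} with hBdef
  have hsum_meas : Measurable fun p : ℝ × (Fin n → ℝ) => ∑ j, p.2 j ^ 2 :=
    Finset.measurable_sum _ fun j _ => ((measurable_pi_apply j).comp measurable_snd).pow_const 2
  have hBm : MeasurableSet B := by
    apply MeasurableSet.inter
    · exact measurableSet_lt (Real.continuous_sqrt.measurable.comp hsum_meas)
        (measurable_fst.mul_const _)
    · exact measurableSet_le ((measurable_fst.pow_const 2).add hsum_meas) measurable_const
  -- step 1 : transfer to the product space
  have hS : ({x : EuclideanSpace ℝ (Fin (n+1)) |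
        Real.sqrt (∑ i ∈ Finset.univ.filter (fun i : Fin (n+1) => i.val ≠ 0), x i ^ 2) <
          x ⟨0, by omega⟩ * Real.tan (δ / 2)} ∩ closedBall 0 r) =
      (MeasurableEquiv.toLp 2 (Fin (n+1) → ℝ)).symm ⁻¹'
        ((MeasurableEquiv.piFinSuccAbove (fun _ : Fin (n+1) => ℝ) 0) ⁻¹' B) := by
    ext x
    have hnorm : ‖x‖ = Real.sqrt (∑ i, x i ^ 2) := by
      rw [EuclideanSpace.norm_eq]
      congr 1
      exact Finset.sum_congr rfl fun i _ => by rw [Real.norm_eq_abs, sq_abs]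
    have hsplit : ∑ i, x i ^ 2 = x 0 ^ 2 + ∑ j : Fin n, x j.succ ^ 2 := Fin.sum_univ_succ _
    have hfst : ((Fin.insertNthEquiv (fun _ : Fin (n+1) => ℝ) 0).symm
        ((MeasurableEquiv.toLp 2 (Fin (n+1) → ℝ)).symm x)).1 = x 0 := rfl
    have hsnd : ∀ j : Fin n, ((Fin.insertNthEquiv (fun _ : Fin (n+1) => ℝ) 0).symm
        ((MeasurableEquiv.toLp 2 (Fin (n+1) → ℝ)).symm x)).2 j = x j.succ := fun j => by
      show x ((0 : Fin (n+1)).succAbove j) = x j.succ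
      rw [Fin.zero_succAbove]
    have h00 : (⟨0, by omega⟩ : Fin (n+1)) = 0 := rfl
    simp only [Set.mem_inter_iff, Set.mem_setOf_eq, mem_closedBall_zero_iff, Set.mem_preimage,
      hBdef, MeasurableEquiv.piFinSuccAbove_apply, hnorm, hfst, hsnd, h00]
    rw [sum_filter_ne_zero n (fun i => x i ^ 2)]
    have hco : True := trivial
    constructor
    · rintro ⟨h1, h2⟩
      refine ⟨h1, ?_⟩
      have := (Real.sqrt_le_left hr.le).1 h2
      rw [hsplit] at this
      exact this
    · rintro ⟨h1, h2⟩
      refine ⟨h1, ?_⟩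
      rw [Real.sqrt_le_left hr.le, hsplit]
      exact h2
  rw [hS,
    (EuclideanSpace.volume_preserving_symm_measurableEquiv_toLp (Fin (n+1))).measure_preimage
      (((MeasurableEquiv.piFinSuccAbove (fun _ : Fin (n+1) => ℝ) 0).measurable hBm).nullMeasurableSet),
    (volume_preserving_piFinSuccAbove (fun _ : Fin (n+1) => ℝ) 0).measure_preimage
      hBm.nullMeasurableSet,
    Measure.volume_eq_prod, Measure.prod_apply hBm]
  -- step 2 : section volumes
  set F : ℝ → ℝ := fun x => min (x * Real.tan θ) (Real.sqrt (r ^ 2 - x ^ 2)) ^ n with hFdef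
  have hFc : Continuous F := by
    apply Continuous.pow
    exact (continuous_id.mul continuous_const).min (Real.continuous_sqrt.comp (by continuity))
  have hsec : ∀ x : ℝ, volume (Prod.mk x ⁻¹' B) =
      (Set.Ioc 0 r).indicator (fun x => ENNReal.ofReal (F x) * ω) x := by
    intro x
    by_cases hx : x ∈ Set.Ioc 0 r
    · have hx0 := hx.1
      have hxr := hx.2
      have hpre : Prod.mk x ⁻¹' B = {y : Fin n → ℝ |
          Real.sqrt (∑ j, y j ^ 2) < x * Real.tan θ ∧ ∑ j, y j ^ 2 ≤ r ^ 2 - x ^ 2} := by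
        ext y
        simp only [Set.mem_preimage, hBdef, Set.mem_setOf_eq]
        constructor
        · rintro ⟨h1, h2⟩; exact ⟨h1, by linarith⟩
        · rintro ⟨h1, h2⟩; exact ⟨h1, by linarith⟩
      rw [hpre, Set.indicator_of_mem hx,
        section_vol n hn (x * Real.tan θ) (r ^ 2 - x ^ 2) (by positivity) (by nlinarith)]
    · rw [Set.indicator_of_notMem hx]
      convert measure_empty
      · ext y
        simp only [Set.mem_preimage, hBdef, Set.mem_setOf_eq, Set.mem_empty_iff_false,
          iff_false, not_and]
        intro h1
        have hy : (0:ℝ) ≤ ∑ j, y j ^ 2 := Finset.sum_nonneg fun j _ => sq_nonneg _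
        simp only [Set.mem_Ioc, not_and_or, not_lt, not_le] at hx
        rcases hx with hx | hx
        · exact absurd h1 (not_lt.2 (le_trans (by nlinarith) (Real.sqrt_nonneg _)))
        · intro h2; nlinarith
      · infer_instance
  rw [lintegral_congr hsec, lintegral_indicator measurableSet_Ioc _,
    lintegral_mul_const ω (f := fun a => ENNReal.ofReal (F a)) (ENNReal.measurable_ofReal.comp hFc.measurable)]
  -- step 3 : compute the integral
  have hF0 : (0 : ℝ → ℝ) ≤ᵐ[volume.restrict (Set.Ioc 0 r)] F := by
    refine (ae_restrict_iff' measurableSet_Ioc).2 (Filter.Eventually.of_forall fun x hx => ?_)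
    have : (0:ℝ) ≤ min (x * Real.tan θ) (Real.sqrt (r ^ 2 - x ^ 2)) :=
      le_min (by nlinarith [hx.1]) (Real.sqrt_nonneg _)
    positivity
  have hFi : IntegrableOn F (Set.Ioc 0 r) volume := hFc.integrableOn_Ioc
  rw [← ofReal_integral_eq_lintegral_ofReal hFi hF0, ← intervalIntegral.integral_of_le hr.le]
  -- split the interval integral
  have hrc0 : 0 ≤ r * Real.cos θ := by positivity
  have hrcr : r * Real.cos θ ≤ r := by nlinarith
  have hsplit : ∫ x in (0:ℝ)..r, F x =
      (∫ x in (0:ℝ)..(r * Real.cos θ), F x) + ∫ x in (r * Real.cos θ)..r, F x :=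
    (intervalIntegral.integral_add_adjacent_intervals
      (hFc.intervalIntegrable _ _) (hFc.intervalIntegrable _ _)).symm
  have hI1 : ∫ x in (0:ℝ)..(r * Real.cos θ), F x =
      r ^ (n+1) * ((1 / ((n:ℝ)+1)) * Real.sin θ ^ n * Real.cos θ) := by
    have hcongr : ∫ x in (0:ℝ)..(r * Real.cos θ), F x =
        ∫ x in (0:ℝ)..(r * Real.cos θ), Real.tan θ ^ n * x ^ n := by
      apply intervalIntegral.integral_congr
      intro x hx
      rw [Set.uIcc_of_le hrc0] at hx
      have hx0 := hx.1
      have hx2 := hx.2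
      have h1 : x ^ 2 ≤ (r * Real.cos θ) ^ 2 := by nlinarith
      have hxr' : x ≤ r := le_trans hx2 hrcr
      have hy : (0:ℝ) ≤ r ^ 2 - x ^ 2 := by nlinarith
      have h2 : (x * Real.tan θ) ^ 2 ≤ r ^ 2 * Real.sin θ ^ 2 := by
        calc (x * Real.tan θ) ^ 2 = x ^ 2 * Real.tan θ ^ 2 := by ring
          _ ≤ (r * Real.cos θ) ^ 2 * Real.tan θ ^ 2 :=
              mul_le_mul_of_nonneg_right h1 (sq_nonneg _)
          _ = r ^ 2 * (Real.tan θ * Real.cos θ) ^ 2 := by ring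
          _ = r ^ 2 * Real.sin θ ^ 2 := by rw [htc]
      have h3 : r ^ 2 * Real.sin θ ^ 2 ≤ r ^ 2 - x ^ 2 := by nlinarith [hpyth, sq_nonneg r, h1]
      have hmin : min (x * Real.tan θ) (Real.sqrt (r ^ 2 - x ^ 2)) = x * Real.tan θ := by
        apply min_eq_left
        rw [Real.le_sqrt (by positivity) hy]
        linarith
      simp only [hFdef, hmin, mul_pow, mul_comm]
    rw [hcongr, intervalIntegral.integral_const_mul, integral_pow]
    have hkey : Real.tan θ ^ n * (r * Real.cos θ) ^ (n+1) = r ^ (n+1) * Real.sin θ ^ n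
        * Real.cos θ := by
      have h4 : Real.tan θ ^ n * Real.cos θ ^ n = Real.sin θ ^ n := by rw [← mul_pow, htc]
      calc Real.tan θ ^ n * (r * Real.cos θ) ^ (n+1)
          = (Real.tan θ ^ n * Real.cos θ ^ n) * (r ^ (n+1) * Real.cos θ) := by ring
        _ = _ := by rw [h4]; ring
    have hnz : ((n:ℝ) + 1) ≠ 0 := by positivity
    rw [zero_pow n.succ_ne_zero, sub_zero]
    field_simp
    linear_combination hkey
  have hI2 : ∫ x in (r * Real.cos θ)..r, F x =
      r ^ (n+1) * ((1/2) * ∫ t in (Real.cos θ ^ 2)..1,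
        t ^ (-(1:ℝ)/2) * (1 - t) ^ ((n:ℝ)/2)) := by
    have hcongr : ∫ x in (r * Real.cos θ)..r, F x =
        ∫ x in (r * Real.cos θ)..r, Real.sqrt (r ^ 2 - x ^ 2) ^ n := by
      apply intervalIntegral.integral_congr
      intro x hx
      rw [Set.uIcc_of_le hrcr] at hx
      have hx1 := hx.1
      have hx2 := hx.2
      have h1 : (r * Real.cos θ) ^ 2 ≤ x ^ 2 := by nlinarith
      have h2 : r ^ 2 * Real.sin θ ^ 2 ≤ (x * Real.tan θ) ^ 2 := by
        calc r ^ 2 * Real.sin θ ^ 2 = r ^ 2 * (Real.tan θ * Real.cos θ) ^ 2 := by rw [htc]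
          _ = (r * Real.cos θ) ^ 2 * Real.tan θ ^ 2 := by ring
          _ ≤ x ^ 2 * Real.tan θ ^ 2 := mul_le_mul_of_nonneg_right h1 (sq_nonneg _)
          _ = (x * Real.tan θ) ^ 2 := by ring
      have hmin : min (x * Real.tan θ) (Real.sqrt (r ^ 2 - x ^ 2)) =
          Real.sqrt (r ^ 2 - x ^ 2) := by
        apply min_eq_right
        have hxpos : (0:ℝ) ≤ x * Real.tan θ := by nlinarith
        rw [Real.sqrt_le_left hxpos]
        nlinarith [hpyth, sq_nonneg r]
      simp only [hFdef, hmin]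
    rw [hcongr]
    have hcomp := intervalIntegral.integral_comp_mul_left
      (f := fun x => Real.sqrt (r ^ 2 - x ^ 2) ^ n) (a := Real.cos θ) (b := 1) hr.ne'
    rw [mul_one] at hcomp
    have hr' : (∫ x in (r * Real.cos θ)..r, Real.sqrt (r ^ 2 - x ^ 2) ^ n) =
        r * ∫ u in (Real.cos θ)..1, Real.sqrt (r ^ 2 - (r * u) ^ 2) ^ n := by
      rw [hcomp, smul_eq_mul, ← mul_assoc, mul_inv_cancel₀ hr.ne', one_mul]
    rw [hr']
    have hscale : ∀ u : ℝ, Real.sqrt (r ^ 2 - (r * u) ^ 2) ^ n =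
        r ^ n * Real.sqrt (1 - u ^ 2) ^ n := by
      intro u
      rw [show r ^ 2 - (r * u) ^ 2 = r ^ 2 * (1 - u ^ 2) by ring,
        Real.sqrt_mul (sq_nonneg r), Real.sqrt_sq hr.le, mul_pow]
    simp only [hscale]
    rw [intervalIntegral.integral_const_mul, subst_sqrt n (Real.cos θ) hcos hcos1.le]
    ring
  rw [hsplit, hI1, hI2]
  have hb : betaFn (1/2) (((n:ℝ)+2)/2) - incBetaFn (Real.cos θ ^ 2) (1/2) (((n:ℝ)+2)/2)
      = ∫ t in (Real.cos θ ^ 2)..1, t ^ (-(1:ℝ)/2) * (1 - t) ^ ((n:ℝ)/2) :=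
    beta_split n hn (Real.cos θ ^ 2) (by positivity) (by nlinarith)
  rw [mul_comm]
  congr 1
  rw [show ((↑(n+1):ℝ) + 1) / 2 = ((n:ℝ)+2)/2 by push_cast; ring]
  congr 1
  rw [hb]
  push_cast
  ring
end

section
/- Let X, Y ∈ R^{d×n}. Then the ∞-Wasserstein distance between their empirical measures satisfies W_∞(M(X), M(Y)) = min_{π ∈ S_n} max_{1 ≤ i ≤ n} ‖X_{:,i} − Y_{:,π(i)}‖. -/
open MeasureTheory
open scoped ENNReal

/-- The empirical measure `(1/n) Σ_i δ_{X i}` of a finite sequence of points. -/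
noncomputable def empiricalMeasure {E : Type*} [MeasurableSpace E] {n : ℕ}
    (X : Fin n → E) : Measure E :=
  (n : ℝ≥0∞)⁻¹ • ∑ i, Measure.dirac (X i)

/-- The `∞`-Wasserstein distance: infimum over couplings of the essential supremum of
`‖x - y‖`. -/
noncomputable def wassersteinInfDist {E : Type*} [MeasurableSpace E] [NormedAddCommGroup E]
    (μ ν : Measure E) : ℝ :=
  sInf {c : ℝ | ∃ π : Measure (E × E), π.map Prod.fst = μ ∧ π.map Prod.snd = ν ∧
    ∀ᵐ p ∂π, ‖p.1 - p.2‖ ≤ c}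

lemma empiricalMeasure_eq_sum {E : Type*} [MeasurableSpace E] {n : ℕ} (X : Fin n → E) :
    empiricalMeasure X = (n : ℝ≥0∞)⁻¹ • Measure.sum (fun i => Measure.dirac (X i)) := by
  rw [empiricalMeasure, Measure.sum_fintype]

lemma empirical_apply {E : Type*} [MeasurableSpace E] {n : ℕ} (X : Fin n → E)
    {s : Set E} (hs : MeasurableSet s) [DecidablePred (· ∈ s)] :
    empiricalMeasure X s =
      (n : ℝ≥0∞)⁻¹ * (Finset.univ.filter (fun i => X i ∈ s)).card := by
  simp [empiricalMeasure, Measure.coe_finset_sum, Finset.sum_apply,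
    Measure.dirac_apply' _ hs, Set.indicator_apply, Finset.sum_boole]

lemma aux_coupling {d n : ℕ} (X Y : Fin n → EuclideanSpace ℝ (Fin d)) (σ : Equiv.Perm (Fin n)) (c : ℝ)
    (hc : ∀ i, ‖X i - Y (σ i)‖ ≤ c) :
    ∃ π : Measure (EuclideanSpace ℝ (Fin d) × EuclideanSpace ℝ (Fin d)),
      π.map Prod.fst = empiricalMeasure X ∧ π.map Prod.snd = empiricalMeasure Y ∧
      ∀ᵐ p ∂π, ‖p.1 - p.2‖ ≤ c := by
  refine ⟨(n : ℝ≥0∞)⁻¹ • Measure.sum (fun i => Measure.dirac (X i, Y (σ i))), ?_, ?_, ?_⟩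
  · rw [Measure.map_smul, Measure.map_sum measurable_fst.aemeasurable,
      empiricalMeasure_eq_sum]
    simp [Measure.map_dirac' measurable_fst]
  · rw [Measure.map_smul, Measure.map_sum measurable_snd.aemeasurable,
      empiricalMeasure_eq_sum]
    congr 1
    simp only [Measure.map_dirac' measurable_snd]
    rw [Measure.sum_fintype, Measure.sum_fintype]
    exact Equiv.sum_comp σ (fun i => Measure.dirac (Y i))
  · apply Measure.ae_smul_measure
    rw [Measure.ae_sum_iff]
    intro i
    rw [MeasureTheory.ae_dirac_eq]
    exact hc i

lemma aux_hall {d n : ℕ} (hn : 0 < n) (X Y : Fin n → EuclideanSpace ℝ (Fin d)) (c : ℝ)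
    (π : Measure (EuclideanSpace ℝ (Fin d) × EuclideanSpace ℝ (Fin d)))
    (h1 : π.map Prod.fst = empiricalMeasure X) (h2 : π.map Prod.snd = empiricalMeasure Y)
    (hae : ∀ᵐ p ∂π, ‖p.1 - p.2‖ ≤ c) :
    ∃ σ : Equiv.Perm (Fin n), ∀ i, ‖X i - Y (σ i)‖ ≤ c := by
  classical
  set r : Fin n → Finset (Fin n) :=
    fun i => Finset.univ.filter (fun j => ‖X i - Y j‖ ≤ c) with hr
  have hall : ∀ A : Finset (Fin n), A.card ≤ (A.biUnion r).card := by
    intro A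
    set B := A.biUnion r with hB
    set S : Set (EuclideanSpace ℝ (Fin d)) := ↑(A.image X) with hSdef
    set T : Set (EuclideanSpace ℝ (Fin d)) := ↑(B.image Y) with hTdef
    have hS : MeasurableSet S := (A.image X).finite_toSet.measurableSet
    have hT : MeasurableSet T := (B.image Y).finite_toSet.measurableSet
    have hR : MeasurableSet (Set.range Y) :=
      (Set.finite_range Y).measurableSet
    -- π of the bad sets is zero
    have e3 : π {p : EuclideanSpace ℝ (Fin d) × EuclideanSpace ℝ (Fin d)
        | ¬ ‖p.1 - p.2‖ ≤ c} = 0 := ae_iff.mp hae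
    have e2 : π (Prod.snd ⁻¹' (Set.range Y)ᶜ) = 0 := by
      rw [← Measure.map_apply measurable_snd hR.compl, h2, empirical_apply _ hR.compl]
      have : (Finset.univ.filter (fun j => Y j ∈ (Set.range Y)ᶜ)) = ∅ := by
        ext j; simp
      rw [this]; simp
    -- the subset claim
    have hsub : S ×ˢ (Set.univ : Set (EuclideanSpace ℝ (Fin d))) ⊆
        (Prod.snd ⁻¹' T) ∪ ({p : EuclideanSpace ℝ (Fin d) × EuclideanSpace ℝ (Fin d)
          | ¬ ‖p.1 - p.2‖ ≤ c} ∪ Prod.snd ⁻¹' (Set.range Y)ᶜ) := by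
      rintro ⟨x, y⟩ ⟨hx, -⟩
      by_cases hy : y ∈ Set.range Y
      · by_cases hxy : ‖x - y‖ ≤ c
        · left
          obtain ⟨j, rfl⟩ := hy
          obtain ⟨i, hiA, rfl⟩ := Finset.mem_image.mp (by exact_mod_cast hx)
          refine Finset.mem_coe.mpr (Finset.mem_image.mpr ⟨j, ?_, rfl⟩)
          exact Finset.mem_biUnion.mpr ⟨i, hiA, by simp [hr, hxy]⟩
        · right; left; exact hxy
      · right; right; exact hy
    -- key measure inequality
    have key : empiricalMeasure X S ≤ empiricalMeasure Y T := by
      rw [← h1, ← h2, Measure.map_apply measurable_fst hS,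
        Measure.map_apply measurable_snd hT]
      calc π (Prod.fst ⁻¹' S) = π (S ×ˢ Set.univ) := by rw [Set.prod_univ]
        _ ≤ π ((Prod.snd ⁻¹' T) ∪ _) := measure_mono hsub
        _ ≤ π (Prod.snd ⁻¹' T) + π ({p : EuclideanSpace ℝ (Fin d) × EuclideanSpace ℝ (Fin d)
              | ¬ ‖p.1 - p.2‖ ≤ c} ∪ Prod.snd ⁻¹' (Set.range Y)ᶜ) := measure_union_le _ _
        _ = π (Prod.snd ⁻¹' T) := by rw [measure_union_null e3 e2, add_zero]
    rw [empirical_apply _ hS, empirical_apply _ hT] at key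
    have hcard : ((Finset.univ.filter (fun i => X i ∈ S)).card : ℝ≥0∞) ≤
        ((Finset.univ.filter (fun j => Y j ∈ T)).card : ℝ≥0∞) := by
      have hne : ((n : ℝ≥0∞))⁻¹ ≠ 0 := by
        simp [ENNReal.inv_ne_zero]
      have hnt : ((n : ℝ≥0∞))⁻¹ ≠ ∞ := by
        simp [ENNReal.inv_ne_top, hn.ne']
      exact (ENNReal.mul_le_mul_iff_right hne hnt).mp key
    have hcard' : (Finset.univ.filter (fun i => X i ∈ S)).card ≤
        (Finset.univ.filter (fun j => Y j ∈ T)).card := by exact_mod_cast hcard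
    have hA : A ⊆ Finset.univ.filter (fun i => X i ∈ S) := by
      intro i hi
      simp only [Finset.mem_filter, Finset.mem_univ, true_and, hSdef, Finset.mem_coe]
      exact Finset.mem_image.mpr ⟨i, hi, rfl⟩
    have hBsub : Finset.univ.filter (fun j => Y j ∈ T) ⊆ B := by
      intro j hj
      simp only [Finset.mem_filter, Finset.mem_univ, true_and, hTdef, Finset.mem_coe] at hj
      obtain ⟨j', hj'B, hjj'⟩ := Finset.mem_image.mp hj
      obtain ⟨i, hiA, hir⟩ := Finset.mem_biUnion.mp hj'B
      refine Finset.mem_biUnion.mpr ⟨i, hiA, ?_⟩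
      simp only [hr, Finset.mem_filter, Finset.mem_univ, true_and] at hir ⊢
      rw [← hjj']; exact hir
    calc A.card ≤ (Finset.univ.filter (fun i => X i ∈ S)).card := Finset.card_le_card hA
      _ ≤ (Finset.univ.filter (fun j => Y j ∈ T)).card := hcard'
      _ ≤ B.card := Finset.card_le_card hBsub
  obtain ⟨f, hf_inj, hf_mem⟩ := (Finset.all_card_le_biUnion_card_iff_exists_injective r).mp hall
  refine ⟨Equiv.ofBijective f (Finite.injective_iff_bijective.mp hf_inj), fun i => ?_⟩
  have := hf_mem i
  simp only [hr, Finset.mem_filter] at this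
  exact this.2

/-- For empirical measures of two sequences of equal length `n`,
`W_∞(M(X), M(Y)) = min_{π ∈ S_n} max_i ‖X_i − Y_{π(i)}‖`. -/
theorem wassersteinInf_empirical_eq_min_perm (d n : ℕ) (hn : 0 < n)
    (X Y : Fin n → EuclideanSpace ℝ (Fin d)) :
    wassersteinInfDist (empiricalMeasure X) (empiricalMeasure Y) =
      ⨅ π : Equiv.Perm (Fin n), ⨆ i : Fin n, ‖X i - Y (π i)‖ := by
  haveI : Nonempty (Fin n) := ⟨⟨0, hn⟩⟩
  set v : Equiv.Perm (Fin n) → ℝ := fun σ => ⨆ i, ‖X i - Y (σ i)‖ with hv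
  set m : ℝ := ⨅ σ, v σ with hm
  set S : Set ℝ := {c : ℝ | ∃ π : Measure (EuclideanSpace ℝ (Fin d) × EuclideanSpace ℝ (Fin d)),
      π.map Prod.fst = empiricalMeasure X ∧ π.map Prod.snd = empiricalMeasure Y ∧
      ∀ᵐ p ∂π, ‖p.1 - p.2‖ ≤ c} with hSdef
  have hvS : ∀ σ, v σ ∈ S := fun σ =>
    aux_coupling X Y σ (v σ) (fun i =>
    le_ciSup (f := fun i => ‖X i - Y (σ i)‖) (Set.Finite.bddAbove (Set.finite_range _)) i)
  have lb : m ∈ lowerBounds S := by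
    rintro c ⟨π, h1, h2, hae⟩
    obtain ⟨σ, hσ⟩ := aux_hall hn X Y c π h1 h2 hae
    calc m ≤ v σ := ciInf_le (Set.Finite.bddBelow (Set.finite_range _)) σ
      _ ≤ c := ciSup_le hσ
  have hne : S.Nonempty := ⟨v 1, hvS 1⟩
  have : wassersteinInfDist (empiricalMeasure X) (empiricalMeasure Y) = sInf S := rfl
  rw [this]
  exact le_antisymm (le_ciInf fun σ => csInf_le ⟨m, lb⟩ (hvS σ)) (le_csInf hne lb)
end
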